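/- arXiv:0801.4835 — 2 statements merged into one kernel-verified Lean document; each statement's English description precedes it below -/
import Mathlib

section
/- For d ≥ 1, the d-pyrope Π_d := tconv({(1,1,…,1)} ∪ {−e_1, …, −e_d}) ⊆ ℝ^d, the tropical convex hull of the d+1 points (1,…,1), −e_1, …, −e_d, equals the ordinary convex hull conv([0,1]^d ∪ [−1,0]^d); in particular Π_d is a polytrope. -/
open Set

noncomputable section

/-- Extended (homogeneous) coordinates of a point of `TA^d ≅ ℝ^d`:
the 0-th coordinate is normalized to `0`. -/
def ext {d : ℕ} (x : Fin d → ℝ) : Fin (d + 1) → ℝ := Fin.cons 0 x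

/-- The tropical combination of `(l, x)` and `(m, y)`. -/
def tropComb {d : ℕ} (l m : ℝ) (x y : Fin d → ℝ) : Fin d → ℝ :=
  fun i => min (l + x i) (m + y i) - min l m

/-- A set is tropically convex if it is closed under tropical combinations. -/
def TropConvex {d : ℕ} (S : Set (Fin d → ℝ)) : Prop :=
  ∀ x ∈ S, ∀ y ∈ S, ∀ l m : ℝ, tropComb l m x y ∈ S

/-- The tropical convex hull: the intersection of all tropically convex supersets. -/
def tconv {d : ℕ} (V : Set (Fin d → ℝ)) : Set (Fin d → ℝ) :=
  ⋂₀ {S : Set (Fin d → ℝ) | TropConvex S ∧ V ⊆ S}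

/-- A tropical polytope is the tropical convex hull of a finite set. -/
def IsTropPolytope {d : ℕ} (P : Set (Fin d → ℝ)) : Prop :=
  ∃ V : Finset (Fin d → ℝ), P = tconv (V : Set (Fin d → ℝ))

/-- A polytrope is a tropical polytope which is also convex in the ordinary sense. -/
def IsPolytrope {d : ℕ} (P : Set (Fin d → ℝ)) : Prop :=
  IsTropPolytope P ∧ Convex ℝ P


-- aux
lemma ext_tropComb {d : ℕ} (l m : ℝ) (x y : Fin d → ℝ) (i : Fin (d+1)) :
    ext (tropComb l m x y) i = min (l + ext x i) (m + ext y i) - min l m := by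
  induction i using Fin.cases with
  | zero => simp [_root_.ext, tropComb]
  | succ k => simp [_root_.ext, tropComb]

def Hset (d : ℕ) : Set (Fin d → ℝ) := {x | ∀ i j : Fin (d+1), ext x i - ext x j ≤ 1}

lemma min_sub_min_le {a1 a2 b1 b2 : ℝ} (h1 : a1 - b1 ≤ 1) (h2 : a2 - b2 ≤ 1) :
    min a1 a2 - min b1 b2 ≤ 1 := by
  rcases le_total b1 b2 with h | h
  · rw [min_eq_left h]; have := min_le_left a1 a2; linarith
  · rw [min_eq_right h]; have := min_le_right a1 a2; linarith

lemma Hset_tropConvex {d : ℕ} : TropConvex (Hset d) := by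
  intro x hx y hy l m i j
  rw [Hset] at *
  simp only [mem_setOf_eq] at *
  rw [ext_tropComb, ext_tropComb]
  have h1 : (l + ext x i) - (l + ext x j) ≤ 1 := by have := hx i j; linarith
  have h2 : (m + ext y i) - (m + ext y j) ≤ 1 := by have := hy i j; linarith
  have := min_sub_min_le h1 h2
  linarith

lemma tropSpan {d : ℕ} {S : Set (Fin d → ℝ)} (hS : TropConvex S) {ι : Type}
    {T : Finset ι} (hT : T.Nonempty) (lam : ι → ℝ) (p : ι → Fin d → ℝ)
    (hp : ∀ j ∈ T, p j ∈ S) :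
    (fun i => T.inf' hT (fun j => lam j + p j i) - T.inf' hT lam) ∈ S := by
  induction hT using Finset.Nonempty.cons_induction with
  | singleton a =>
    have he : (fun i => ({a} : Finset ι).inf' (Finset.singleton_nonempty a)
        (fun j => lam j + p j i) - ({a} : Finset ι).inf' (Finset.singleton_nonempty a) lam)
        = p a := by
      funext i; simp
    rw [he]
    exact hp a (Finset.mem_singleton_self a)
  | cons a T h hT ih =>
    have hw := ih (fun j hj => hp j (Finset.mem_cons_of_mem hj))
    have he : (fun i => (Finset.cons a T h).inf' (Finset.cons_nonempty h)
        (fun j => lam j + p j i) - (Finset.cons a T h).inf' (Finset.cons_nonempty h) lam)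
        = tropComb (T.inf' hT lam) (lam a)
            (fun i => T.inf' hT (fun j => lam j + p j i) - T.inf' hT lam) (p a) := by
      funext i
      simp only [Finset.inf'_cons hT, tropComb]
      have : T.inf' hT lam + (T.inf' hT (fun j => lam j + p j i) - T.inf' hT lam)
          = T.inf' hT (fun j => lam j + p j i) := by ring
      rw [this, min_comm (lam a + p a i), min_comm (lam a)]
    rw [he]
    exact hS _ hw _ (hp a (Finset.mem_cons_self a T)) _ _

def pyrGen (d : ℕ) : Fin (d + 1) → Fin d → ℝ :=
  Fin.cons (fun _ => 1) (fun i k => if k = i then -1 else 0)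

lemma pyrGen_mem_Hset {d : ℕ} (j : Fin (d + 1)) : pyrGen d j ∈ Hset d := by
  induction j using Fin.cases with
  | zero =>
    have hb : ∀ i : Fin (d+1), 0 ≤ ext (pyrGen d 0) i ∧ ext (pyrGen d 0) i ≤ 1 := by
      intro i
      induction i using Fin.cases with
      | zero => simp [_root_.ext, pyrGen]
      | succ k => simp [_root_.ext, pyrGen]
    intro i j
    have h1 := hb i
    have h2 := hb j
    linarith [h1.1, h1.2, h2.1, h2.2]
  | succ k =>
    have hb : ∀ i : Fin (d+1), -1 ≤ ext (pyrGen d k.succ) i ∧ ext (pyrGen d k.succ) i ≤ 0 := by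
      intro i
      induction i using Fin.cases with
      | zero => simp [_root_.ext, pyrGen]
      | succ k' =>
        simp only [_root_.ext, pyrGen, Fin.cons_succ]
        by_cases h : k' = k <;> simp [h]
    intro i j
    have h1 := hb i
    have h2 := hb j
    linarith [h1.1, h1.2, h2.1, h2.2]

lemma Hset_subset_tconv {d : ℕ} (x : Fin d → ℝ) (hx : x ∈ Hset d) :
    x ∈ tconv (Set.range (pyrGen d)) := by
  intro S hS
  obtain ⟨hTC, hsub⟩ := hS
  have h1 : ∀ k : Fin d, -1 ≤ x k := by
    intro k
    have := hx 0 k.succ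
    simp only [_root_.ext, Fin.cons_zero, Fin.cons_succ] at this
    linarith
  have h2 : ∀ k : Fin d, x k ≤ 1 := by
    intro k
    have := hx k.succ 0
    simp only [_root_.ext, Fin.cons_zero, Fin.cons_succ] at this
    linarith
  have h3 : ∀ k k' : Fin d, x k - x k' ≤ 1 := fun k k' => by
    have := hx k.succ k'.succ
    simpa only [_root_.ext, Fin.cons_succ] using this
  set lam : Fin (d+1) → ℝ := Fin.cons 0 (fun k => x k + 1) with hlam
  have hne : (Finset.univ : Finset (Fin (d+1))).Nonempty := Finset.univ_nonempty
  have hlam0 : Finset.univ.inf' hne lam = 0 := by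
    apply le_antisymm
    · have := Finset.inf'_le lam (Finset.mem_univ (0 : Fin (d+1)))
      exact this.trans (by simp [hlam])
    · apply Finset.le_inf'
      intro j _
      induction j using Fin.cases with
      | zero => simp [hlam]
      | succ k => simp only [hlam, Fin.cons_succ]; linarith [h1 k]
  have hrep : x = fun i => Finset.univ.inf' hne (fun j => lam j + pyrGen d j i)
      - Finset.univ.inf' hne lam := by
    funext i
    rw [hlam0, sub_zero]
    apply le_antisymm
    · apply Finset.le_inf'
      intro j _
      induction j using Fin.cases with
      | zero => simp only [hlam, pyrGen, Fin.cons_zero]; linarith [h2 i]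
      | succ k =>
        simp only [hlam, pyrGen, Fin.cons_succ]
        by_cases h : i = k
        · subst h; simp
        · simp only [h, if_false]; linarith [h3 i k]
    · have hle := Finset.inf'_le (fun j => lam j + pyrGen d j i) (Finset.mem_univ i.succ)
      have hval : lam i.succ + pyrGen d i.succ i = x i := by
        simp [hlam, pyrGen]
      rw [hval] at hle
      exact hle
  rw [hrep]
  exact tropSpan hTC hne lam (pyrGen d) (fun j _ => hsub ⟨j, rfl⟩)

lemma ext_comb {d : ℕ} (a b : ℝ) (x y : Fin d → ℝ) (i : Fin (d+1)) :
    ext (a • x + b • y) i = a * ext x i + b * ext y i := by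
  induction i using Fin.cases with
  | zero => simp [_root_.ext]
  | succ k => simp [_root_.ext, mul_comm]

lemma Hset_convex {d : ℕ} : Convex ℝ (Hset d) := by
  intro x hx y hy a b ha hb hab i j
  rw [ext_comb, ext_comb]
  nlinarith [hx i j, hy i j, mul_le_mul_of_nonneg_left (hx i j) ha,
    mul_le_mul_of_nonneg_left (hy i j) hb]

lemma cube_subset_Hset {d : ℕ} :
    Icc (0 : Fin d → ℝ) 1 ∪ Icc (-1) 0 ⊆ Hset d := by
  rintro x (⟨hl, hu⟩ | ⟨hl, hu⟩)
  · have hb : ∀ i : Fin (d+1), 0 ≤ ext x i ∧ ext x i ≤ 1 := by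
      intro i
      induction i using Fin.cases with
      | zero => simp [_root_.ext]
      | succ k => exact ⟨by simpa [_root_.ext] using hl k, by simpa [_root_.ext] using hu k⟩
    intro i j
    linarith [(hb i).1, (hb i).2, (hb j).1, (hb j).2]
  · have hb : ∀ i : Fin (d+1), -1 ≤ ext x i ∧ ext x i ≤ 0 := by
      intro i
      induction i using Fin.cases with
      | zero => simp [_root_.ext]
      | succ k => exact ⟨by simpa [_root_.ext] using hl k, by simpa [_root_.ext] using hu k⟩
    intro i j
    linarith [(hb i).1, (hb i).2, (hb j).1, (hb j).2]

lemma Hset_subset_hull {d : ℕ} (hd : 1 ≤ d) :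
    Hset d ⊆ convexHull ℝ (Icc (0 : Fin d → ℝ) 1 ∪ Icc (-1) 0) := by
  intro x hx
  have h1 : ∀ k : Fin d, -1 ≤ x k := by
    intro k
    have := hx 0 k.succ
    simp only [_root_.ext, Fin.cons_zero, Fin.cons_succ] at this
    linarith
  have h2 : ∀ k : Fin d, x k ≤ 1 := by
    intro k
    have := hx k.succ 0
    simp only [_root_.ext, Fin.cons_zero, Fin.cons_succ] at this
    linarith
  have h3 : ∀ k k' : Fin d, x k - x k' ≤ 1 := fun k k' => by
    have := hx k.succ k'.succ
    simpa only [_root_.ext, Fin.cons_succ] using this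
  haveI : Nonempty (Fin d) := ⟨⟨0, hd⟩⟩
  have hne : (Finset.univ : Finset (Fin d)).Nonempty := Finset.univ_nonempty
  set t : ℝ := max (Finset.univ.sup' hne x) 0 with ht
  have ht0 : 0 ≤ t := le_max_right _ _
  have htx : ∀ i, x i ≤ t := fun i =>
    le_max_of_le_left (Finset.le_sup' x (Finset.mem_univ i))
  have ht1 : t ≤ 1 := max_le (Finset.sup'_le _ _ (fun i _ => h2 i)) zero_le_one
  have htlow : ∀ i, t - 1 ≤ x i := by
    intro i
    have : t ≤ 1 + x i := max_le (Finset.sup'_le _ _ (fun j _ => by linarith [h3 j i]))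
      (by linarith [h1 i])
    linarith
  by_cases htz : t = 0
  · refine subset_convexHull ℝ _ (Or.inr ⟨fun i => ?_, fun i => ?_⟩)
    · simpa using h1 i
    · simpa using (htx i).trans (le_of_eq htz)
  · have htpos : 0 < t := lt_of_le_of_ne ht0 (Ne.symm htz)
    set u : Fin d → ℝ := fun i => max (x i) 0 / t with hu
    set v : Fin d → ℝ := fun i => min (x i) 0 / (1 - t) with hv
    have humem : u ∈ Icc (0 : Fin d → ℝ) 1 := by
      constructor
      · intro i
        simpa [hu] using div_nonneg (le_max_right _ _) ht0
      · intro i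
        simpa [hu] using (div_le_one htpos).mpr (max_le (htx i) ht0)
    have hvmem : v ∈ Icc (-1 : Fin d → ℝ) 0 := by
      by_cases ht1' : t = 1
      · have hvz : v = 0 := by
          funext i
          have : min (x i) 0 = 0 := min_eq_right (by linarith [htlow i, ht1'.ge, ht1'.le])
          simp [hv, this]
        rw [hvz]
        constructor
        · intro i; simp
        · intro i; simp
      · have h1mt : 0 < 1 - t := by
          rcases lt_or_eq_of_le ht1 with h | h
          · linarith
          · exact absurd h ht1'
        constructor
        · intro i
          show (-1 : ℝ) ≤ v i
          rw [hv]
          rw [le_div_iff₀ h1mt]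
          have : t - 1 ≤ min (x i) 0 := le_min (by linarith [htlow i]) (by linarith)
          linarith
        · intro i
          show v i ≤ (0 : ℝ)
          exact div_nonpos_of_nonpos_of_nonneg (min_le_right _ _) h1mt.le
    have hxeq : x = t • u + (1 - t) • v := by
      funext i
      simp only [Pi.add_apply, Pi.smul_apply, smul_eq_mul, hu, hv]
      rw [mul_div_cancel₀ _ htz]
      by_cases ht1' : t = 1
      · have hmin : min (x i) 0 = 0 := min_eq_right (by linarith [htlow i, ht1'.ge])
        have hmax : max (x i) 0 = x i := max_eq_left (by linarith [htlow i, ht1'.ge])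
        rw [hmin, hmax, ht1']
        ring
      · have hne1 : 1 - t ≠ 0 := by
          intro h; apply ht1'; linarith
        rw [mul_div_cancel₀ _ hne1]
        rcases le_total (x i) 0 with h | h
        · rw [max_eq_right h, min_eq_left h]; ring
        · rw [max_eq_left h, min_eq_right h]; ring
    rw [hxeq]
    have hc : Convex ℝ (convexHull ℝ (Icc (0 : Fin d → ℝ) 1 ∪ Icc (-1) 0)) :=
      convex_convexHull ℝ _
    exact hc (subset_convexHull ℝ _ (Or.inl humem))
      (subset_convexHull ℝ _ (Or.inr hvmem)) ht0 (by linarith) (by ring)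


/-- The `d`-pyrope `Π_d = tconv{(1,…,1), -e_1, …, -e_d}` equals the ordinary
convex hull `conv([0,1]^d ∪ [-1,0]^d)`; in particular it is a polytrope. -/
theorem pyrope_eq_conv_cubes {d : ℕ} (hd : 1 ≤ d) :
    tconv (Set.range
        (Fin.cons (fun _ => 1) (fun i k => if k = i then -1 else 0) :
          Fin (d + 1) → Fin d → ℝ)) =
        convexHull ℝ (Set.Icc (0 : Fin d → ℝ) 1 ∪ Set.Icc (-1) 0) ∧
      IsPolytrope (tconv (Set.range
        (Fin.cons (fun _ => 1) (fun i k => if k = i then -1 else 0) :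
          Fin (d + 1) → Fin d → ℝ))) := by
  have hEq : tconv (Set.range (pyrGen d))
      = convexHull ℝ (Icc (0 : Fin d → ℝ) 1 ∪ Icc (-1) 0) := by
    apply Set.Subset.antisymm
    · have hsub : tconv (Set.range (pyrGen d)) ⊆ Hset d :=
        sInter_subset_of_mem ⟨Hset_tropConvex, by rintro _ ⟨j, rfl⟩; exact pyrGen_mem_Hset j⟩
      exact hsub.trans (Hset_subset_hull hd)
    · have hsub : convexHull ℝ (Icc (0 : Fin d → ℝ) 1 ∪ Icc (-1) 0) ⊆ Hset d :=
        convexHull_min cube_subset_Hset Hset_convex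
      exact fun x hx => Hset_subset_tconv x (hsub hx)
  refine ⟨hEq, ⟨⟨Finset.univ.image (pyrGen d), ?_⟩, ?_⟩⟩
  · show tconv (Set.range (pyrGen d)) = _
    rw [Finset.coe_image, Finset.coe_univ, Set.image_univ]
  · show Convex ℝ (tconv (Set.range (pyrGen d)))
    rw [hEq]
    exact convex_convexHull ℝ _
end
end

section
/- Let v_1, …, v_n ∈ ℝ^d be finitely many points and let k ∈ {0, …, d}. Then the k-th corner c_k of (v_1, …, v_n) lies in the tropical convex hull tconv{v_1, …, v_n}. -/
open Set

noncomputable section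

/-- The `k`-th corner of the points `v_1, …, v_n`:
`(c_k)_j = min_i (v_{i,j} - v_{i,k}) - min_i (v_{i,0} - v_{i,k})` for `j = 1, …, d`
(homogeneous coordinates, `v_{i,0} := 0`). -/
def corner {d n : ℕ} (v : Fin n → Fin d → ℝ) (k : Fin (d + 1)) : Fin d → ℝ :=
  fun j => (⨅ i, (ext (v i) j.succ - ext (v i) k)) - (⨅ i, (ext (v i) 0 - ext (v i) k))

lemma ciInf_fin_succ' {n : ℕ} [Nonempty (Fin n)] (f : Fin (n + 1) → ℝ) :
    (⨅ i, f i) = min (f 0) (⨅ i : Fin n, f i.succ) := by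
  have hb : BddBelow (Set.range f) := (Set.finite_range f).bddBelow
  have hb' : BddBelow (Set.range fun i : Fin n => f i.succ) :=
    (Set.finite_range _).bddBelow
  apply le_antisymm
  · exact le_min (ciInf_le hb 0) (le_ciInf fun i => ciInf_le hb i.succ)
  · refine le_ciInf fun i => ?_
    cases i using Fin.cases with
    | zero => exact min_le_left _ _
    | succ i => exact (min_le_right _ _).trans (ciInf_le hb' i)

lemma subset_tconv' {d : ℕ} (V : Set (Fin d → ℝ)) : V ⊆ tconv V :=
  fun x hx => Set.mem_sInter.2 fun _ hS => hS.2 hx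

lemma tropConvex_tconv' {d : ℕ} (V : Set (Fin d → ℝ)) : TropConvex (tconv V) :=
  fun x hx y hy l m => Set.mem_sInter.2 fun S hS =>
    hS.1 x (Set.mem_sInter.1 hx S hS) y (Set.mem_sInter.1 hy S hS) l m

lemma tconv_mono' {d : ℕ} {V W : Set (Fin d → ℝ)} (h : V ⊆ W) : tconv V ⊆ tconv W :=
  fun x hx => Set.mem_sInter.2 fun S hS =>
    Set.mem_sInter.1 hx S ⟨hS.1, h.trans hS.2⟩

lemma tropPoint_mem_tconv {d : ℕ} : ∀ {n : ℕ}, 0 < n → ∀ (v : Fin n → Fin d → ℝ)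
    (l : Fin n → ℝ),
    (fun j : Fin d => (⨅ i, (l i + ext (v i) j.succ)) - (⨅ i, (l i + ext (v i) 0)))
      ∈ tconv (Set.range v) := by
  intro n
  induction n with
  | zero => intro h; omega
  | succ n ih =>
    intro _ v l
    rcases Nat.eq_zero_or_pos n with rfl | hn
    · have hpt : (fun j : Fin d =>
          (⨅ i, (l i + ext (v i) j.succ)) - (⨅ i, (l i + ext (v i) 0))) = v 0 := by
        haveI : Unique (Fin (0 + 1)) := inferInstanceAs (Unique (Fin 1))
        funext j
        rw [ciInf_unique, ciInf_unique]
        simp only [_root_.ext, Fin.cons_zero, Fin.cons_succ, add_zero, add_sub_cancel_left]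
        exact congrFun (congrArg v (Subsingleton.elim _ _)) j
      rw [hpt]
      exact subset_tconv' _ ⟨0, rfl⟩
    · haveI : Nonempty (Fin n) := Fin.pos_iff_nonempty.1 hn
      set v' : Fin n → Fin d → ℝ := fun i => v i.succ with hv'
      set l' : Fin n → ℝ := fun i => l i.succ with hl'
      have hx := ih hn v' l'
      have hx' : (fun j : Fin d =>
          (⨅ i, (l' i + ext (v' i) j.succ)) - (⨅ i, (l' i + ext (v' i) 0)))
          ∈ tconv (Set.range v) := by
        refine tconv_mono' ?_ hx
        rintro _ ⟨i, rfl⟩; exact ⟨i.succ, rfl⟩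
      have hy : v 0 ∈ tconv (Set.range v) := subset_tconv' _ ⟨0, rfl⟩
      have key := tropConvex_tconv' (Set.range v) _ hx' _ hy
        (⨅ i, (l' i + ext (v' i) 0)) (l 0)
      convert key using 1
      funext j
      simp only [tropComb]
      rw [ciInf_fin_succ' (fun i => l i + ext (v i) j.succ),
          ciInf_fin_succ' (fun i => l i + ext (v i) 0)]
      have h0 : ∀ i : Fin (n + 1), ext (v i) 0 = 0 := fun i => rfl
      have hyj : ext (v 0) j.succ = v 0 j := rfl
      simp only [h0, hyj, add_zero]
      rw [min_comm (l 0 + v 0 j), min_comm (l 0)]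
      have hc : ∀ a b : ℝ, a + (b - a) = b := fun a b => by ring
      simp only [hl', hv', hc]
      simp only [_root_.ext, Fin.cons_zero, add_zero]

/-- Each corner of a finite point sequence lies in its tropical convex hull. -/
theorem corner_mem_tconv {d n : ℕ} (hn : 0 < n) (v : Fin n → Fin d → ℝ)
    (k : Fin (d + 1)) :
    corner v k ∈ tconv (Set.range v) := by
  have h := tropPoint_mem_tconv hn v (fun i => -ext (v i) k)
  have : corner v k = fun j : Fin d =>
      (⨅ i, ((-ext (v i) k) + ext (v i) j.succ)) - (⨅ i, ((-ext (v i) k) + ext (v i) 0)) := by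
    funext j
    simp only [corner]
    congr 1
    · exact iInf_congr fun i => (neg_add_eq_sub _ _).symm
    · exact iInf_congr fun i => (neg_add_eq_sub _ _).symm
  rw [this]
  exact h
end
end
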